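/- For every prime p and every integer e ≥ 1, there exists a polynomial F with integer coefficients of degree at most p such that for all integers z₀, z₁ with 0 ≤ z₀ < p and every integer e' with 1 ≤ e' ≤ e, one has F(z₀ + p^{e'}·z₁) ≡ z₀ (mod p^{e'+1}). -/

import Mathlib

private lemma modval (p n a : ℕ) (hn : n < p) (ha : a < p) :
    (n + p - a) % p = if a ≤ n then n - a else n + p - a := by
  split
  · have h : n + p - a = p + (n - a) := by omega
    rw [h, Nat.add_mod_left, Nat.mod_eq_of_lt (by omega)]
  · rw [Nat.mod_eq_of_lt (by omega)]

private lemma punctured_wilson (p : ℕ) (hp : p.Prime) (n : ℕ) (hn : n < p) :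
    ∏ i ∈ (Finset.range p).erase n, ((n : ZMod p) - (i : ZMod p)) = -1 := by
  haveI : Fact p.Prime := ⟨hp⟩
  have hp0 : 0 < p := hp.pos
  rw [← ZMod.prod_Ico_one_prime p]
  refine Finset.prod_nbij' (fun a => (n + p - a) % p) (fun b => (n + p - b) % p)
    ?_ ?_ ?_ ?_ ?_
  · intro a ha
    simp only [Finset.mem_erase, Finset.mem_range] at ha
    rw [Finset.mem_Ico, modval p n a hn ha.2]
    split <;> omega
  · intro b hb
    rw [Finset.mem_Ico] at hb
    simp only [Finset.mem_erase, Finset.mem_range]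
    rw [modval p n b hn hb.2]
    split <;> omega
  · intro a ha
    simp only [Finset.mem_erase, Finset.mem_range] at ha
    rw [modval p n a hn ha.2]
    split
    · rw [modval p n (n - a) hn (by omega)]; split <;> omega
    · rw [modval p n (n + p - a) hn (by omega)]; split <;> omega
  · intro b hb
    rw [Finset.mem_Ico] at hb
    rw [modval p n b hn hb.2]
    split
    · rw [modval p n (n - b) hn (by omega)]; split <;> omega
    · rw [modval p n (n + p - b) hn (by omega)]; split <;> omega
  · intro a ha
    simp only [Finset.mem_erase, Finset.mem_range] at ha
    have h1 : (((n + p - a) % p : ℕ) : ZMod p) = ((n + p - a : ℕ) : ZMod p) :=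
      ZMod.natCast_mod _ _
    rw [h1, Nat.cast_sub (by omega)]
    push_cast
    simp [ZMod.natCast_self]

/-- Halevi–Shoup lifting polynomial. -/
theorem lifting_polynomial_exists (p : ℕ) (hp : p.Prime) (e : ℕ) (he : 1 ≤ e) :
    ∃ F : Polynomial ℤ, F.natDegree ≤ p ∧
      ∀ z₀ z₁ : ℤ, 0 ≤ z₀ → z₀ < (p : ℤ) →
        ∀ e' : ℕ, 1 ≤ e' → e' ≤ e →
          F.eval (z₀ + (p : ℤ) ^ e' * z₁) ≡ z₀ [ZMOD (p : ℤ) ^ (e' + 1)] := by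
  refine ⟨Polynomial.X + ∏ i ∈ Finset.range p, (Polynomial.X - Polynomial.C (i : ℤ)), ?_, ?_⟩
  · have hdeg : (∏ i ∈ Finset.range p, (Polynomial.X - Polynomial.C (i : ℤ))).natDegree = p := by
      rw [Polynomial.natDegree_prod _ _ (fun i _ => Polynomial.X_sub_C_ne_zero _)]
      simp only [Polynomial.natDegree_X_sub_C]
      simp
    refine le_trans (Polynomial.natDegree_add_le _ _) ?_
    rw [hdeg, Polynomial.natDegree_X]
    exact max_le hp.one_lt.le le_rfl
  · intro z₀ z₁ hz0 hzp e' he1 _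
    set z : ℤ := z₀ + (p : ℤ) ^ e' * z₁ with hz
    set n : ℕ := z₀.toNat with hndef
    have hn : (n : ℤ) = z₀ := Int.toNat_of_nonneg hz0
    have hnp : n < p := by omega
    have hmem : n ∈ Finset.range p := Finset.mem_range.mpr hnp
    have heval : Polynomial.eval z
        (Polynomial.X + ∏ i ∈ Finset.range p, (Polynomial.X - Polynomial.C (i : ℤ)))
        = z + ∏ i ∈ Finset.range p, (z - (i : ℤ)) := by
      simp [Polynomial.eval_prod]
    rw [heval]
    have hsplit : ∏ i ∈ Finset.range p, (z - (i : ℤ))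
        = (z - n) * ∏ i ∈ (Finset.range p).erase n, (z - (i : ℤ)) :=
      (Finset.mul_prod_erase _ _ hmem).symm
    set P : ℤ := ∏ i ∈ (Finset.range p).erase n, (z - (i : ℤ)) with hP
    have hzn : z - (n : ℤ) = (p : ℤ) ^ e' * z₁ := by rw [hn, hz]; ring
    -- key: p ∣ 1 + P
    have hkey : (p : ℤ) ∣ 1 + P := by
      have : ((1 + P : ℤ) : ZMod p) = 0 := by
        have hcast : ((P : ℤ) : ZMod p)
            = ∏ i ∈ (Finset.range p).erase n, ((n : ZMod p) - (i : ZMod p)) := by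
          rw [hP]
          push_cast
          refine Finset.prod_congr rfl fun i _ => ?_
          have : ((z : ℤ) : ZMod p) = ((n : ℤ) : ZMod p) := by
            rw [hz, hn]
            push_cast
            rw [ZMod.natCast_self]
            rw [zero_pow (by omega : e' ≠ 0)]
            ring
          push_cast at this ⊢
          rw [this]
        push_cast
        push_cast at hcast
        rw [hcast, punctured_wilson p hp n hnp]
        ring
      exact_mod_cast (ZMod.intCast_zmod_eq_zero_iff_dvd _ p).mp this
    obtain ⟨k, hk⟩ := hkey
    have : z + ((z - n) * P) - z₀ = (p : ℤ) ^ (e' + 1) * (z₁ * k) := by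
      have h1 : z - z₀ = (p : ℤ) ^ e' * z₁ := by rw [hz]; ring
      calc z + (z - n) * P - z₀ = (z - z₀) + (z - n) * P := by rw [hn]; ring
        _ = (p : ℤ) ^ e' * z₁ * (1 + P) := by rw [h1, hzn]; ring
        _ = (p : ℤ) ^ e' * z₁ * ((p : ℤ) * k) := by rw [hk]
        _ = (p : ℤ) ^ (e' + 1) * (z₁ * k) := by ring
    rw [hsplit, Int.modEq_iff_dvd]
    exact ⟨-(z₁ * k), by linarith⟩
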